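/- Let G be a simple directed graph with m edges, and remove each edge independently with probability q = (m−r)/m. Then E[Λ^{1,−}·Λ^{1,+}] = q²·(Σ_i (d_i^{−})²)(Σ_i (d_i^{+})²) + q(1−q)·Σ_{(i,j)∈G} d_i^{+} d_j^{−}, where Λ^{1,+} = Σ_i d_i^{+,(r)} d_i^{+} and Λ^{1,−} = Σ_i d_i^{−,(r)} d_i^{−}. -/

import Mathlib

open Finset

lemma binom_sum {α : Type*} [DecidableEq α] (B : Finset α) (p q : ℝ) :
    ∑ S ∈ B.powerset, p ^ S.card * q ^ (B.card - S.card) = (p + q) ^ B.card := by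
  rw [← Finset.prod_const, Finset.prod_add]
  refine Finset.sum_congr rfl fun S hS => ?_
  rw [Finset.prod_const, Finset.prod_const, Finset.card_sdiff_of_subset (Finset.mem_powerset.mp hS)]

lemma weight_avoid {α : Type*} [DecidableEq α] (A T : Finset α) (hT : T ⊆ A)
    (p q : ℝ) (hpq : p + q = 1) :
    ∑ S ∈ A.powerset, p ^ S.card * q ^ (A.card - S.card) *
      (if Disjoint S T then 1 else 0) = q ^ T.card := by
  have key : ∑ S ∈ (A \ T).powerset, p ^ S.card * q ^ (A.card - S.card) = q ^ T.card := by
    have h1 : (A \ T).card = A.card - T.card := Finset.card_sdiff_of_subset hT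
    have hTA : T.card ≤ A.card := Finset.card_le_card hT
    calc ∑ S ∈ (A \ T).powerset, p ^ S.card * q ^ (A.card - S.card)
        = ∑ S ∈ (A \ T).powerset, q ^ T.card * (p ^ S.card * q ^ ((A \ T).card - S.card)) := by
          refine Finset.sum_congr rfl fun S hS => ?_
          have hS' : S.card ≤ (A \ T).card := Finset.card_le_card (Finset.mem_powerset.mp hS)
          have : A.card - S.card = T.card + ((A \ T).card - S.card) := by omega
          rw [this, pow_add]; ring
      _ = q ^ T.card * (p + q) ^ (A \ T).card := by rw [← Finset.mul_sum, binom_sum]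
      _ = q ^ T.card := by rw [hpq, one_pow, mul_one]
  rw [← key]
  rw [← Finset.sum_subset (Finset.powerset_mono.mpr (Finset.sdiff_subset (s := A) (t := T)))
    (f := fun S => p ^ S.card * q ^ (A.card - S.card) * (if Disjoint S T then 1 else 0))
    (by
      intro S hS hS'
      have : ¬ Disjoint S T := by
        intro hd
        exact hS' (Finset.mem_powerset.mpr (Finset.subset_sdiff.mpr ⟨Finset.mem_powerset.mp hS, hd⟩))
      simp [this])]
  refine Finset.sum_congr rfl fun S hS => ?_
  have : Disjoint S T := (Finset.subset_sdiff.mp (Finset.mem_powerset.mp hS)).2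
  simp [this]

lemma resid_sum {V : Type*} [Fintype V] [DecidableEq V]
    (G S : Finset (V × V)) (π : V × V → V) (D : V → ℝ) :
    ∑ i : V, (((G \ S).filter (fun e => π e = i)).card : ℝ) * D i
      = ∑ e ∈ G, (if e ∈ S then (0:ℝ) else 1) * D (π e) := by
  rw [← Finset.sum_fiberwise G (fun e => π e) (fun e => (if e ∈ S then (0:ℝ) else 1) * D (π e))]
  refine Finset.sum_congr rfl fun i _ => ?_
  have h1 : ∑ e ∈ G.filter (fun e => π e = i), (if e ∈ S then (0:ℝ) else 1) * D (π e)
      = (∑ e ∈ G.filter (fun e => π e = i), (if e ∉ S then (1:ℝ) else 0)) * D i := by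
    rw [Finset.sum_mul]
    refine Finset.sum_congr rfl fun e he => ?_
    have := (Finset.mem_filter.mp he).2
    rw [this, ite_not]
  rw [h1, Finset.sum_boole, Finset.filter_filter]
  have h2 : (G \ S).filter (fun e => π e = i) = G.filter (fun e => π e = i ∧ e ∉ S) := by
    ext e
    simp only [Finset.mem_filter, Finset.mem_sdiff]
    tauto
  rw [h2]

lemma deg_sq {V : Type*} [Fintype V] [DecidableEq V]
    (G : Finset (V × V)) (π : V × V → V) :
    ∑ e ∈ G, ((G.filter (fun f => π f = π e)).card : ℝ)
      = ∑ i : V, ((G.filter (fun f => π f = i)).card : ℝ) ^ 2 := by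
  rw [← Finset.sum_fiberwise G (fun e => π e) (fun e => ((G.filter (fun f => π f = π e)).card : ℝ))]
  refine Finset.sum_congr rfl fun i _ => ?_
  have : ∀ e ∈ G.filter (fun e => π e = i),
      ((G.filter (fun f => π f = π e)).card : ℝ) = ((G.filter (fun f => π f = i)).card : ℝ) := by
    intro e he
    rw [(Finset.mem_filter.mp he).2]
  rw [Finset.sum_congr rfl this, Finset.sum_const, nsmul_eq_mul, sq]

/-- E[Λ^{1,−}·Λ^{1,+}] = q²(Σ_i (d_i^−)²)(Σ_i (d_i^+)²)
+ q(1−q)·Σ_{(i,j)∈G} d_i^+ d_j^-, where each edge is removed independently with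
probability q = (m−r)/m. -/
theorem expected_lambda_product {V : Type*} [Fintype V] [DecidableEq V]
    (G : Finset (V × V)) (m r : ℕ) (q : ℝ)
    (hsimple : ∀ e ∈ G, e.1 ≠ e.2)
    (hm : G.card = m) (hmpos : 0 < m) (hr : r ≤ m)
    (hq : q = ((m : ℝ) - r) / m) :
    ∑ S ∈ G.powerset,
      ((r : ℝ) / m) ^ S.card * (((m : ℝ) - r) / m) ^ (m - S.card) *
        ((∑ i : V, (((G \ S).filter (fun e => e.2 = i)).card : ℝ) *
            ((G.filter (fun e => e.2 = i)).card : ℝ)) *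
          (∑ i : V, (((G \ S).filter (fun e => e.1 = i)).card : ℝ) *
            ((G.filter (fun e => e.1 = i)).card : ℝ))) =
      q ^ 2 * (∑ i : V, ((G.filter (fun e => e.2 = i)).card : ℝ) ^ 2) *
          (∑ i : V, ((G.filter (fun e => e.1 = i)).card : ℝ) ^ 2) +
        q * (1 - q) * ∑ e ∈ G, ((G.filter (fun f => f.1 = e.1)).card : ℝ) *
          ((G.filter (fun f => f.2 = e.2)).card : ℝ) := by
  subst hm
  have hm0 : ((G.card : ℕ) : ℝ) ≠ 0 := Nat.cast_ne_zero.mpr hmpos.ne'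
  have hpq : (r : ℝ) / (G.card : ℝ) + q = 1 := by
    rw [hq, ← add_div,
      show (r : ℝ) + (((G.card : ℕ) : ℝ) - (r : ℝ)) = ((G.card : ℕ) : ℝ) by ring,
      div_self hm0]
  rw [← hq]
  calc
    ∑ S ∈ G.powerset,
        ((r : ℝ) / G.card) ^ S.card * q ^ (G.card - S.card) *
          ((∑ i : V, (((G \ S).filter (fun e => e.2 = i)).card : ℝ) *
              ((G.filter (fun e => e.2 = i)).card : ℝ)) *
            (∑ i : V, (((G \ S).filter (fun e => e.1 = i)).card : ℝ) *
              ((G.filter (fun e => e.1 = i)).card : ℝ)))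
      = ∑ S ∈ G.powerset, ∑ e ∈ G, ∑ f ∈ G,
          (((G.filter (fun g => g.2 = e.2)).card : ℝ) *
              ((G.filter (fun g => g.1 = f.1)).card : ℝ)) *
            (((r : ℝ) / G.card) ^ S.card * q ^ (G.card - S.card) *
              ((if e ∈ S then (0:ℝ) else 1) * (if f ∈ S then (0:ℝ) else 1))) := by
        refine Finset.sum_congr rfl fun S hS => ?_
        rw [resid_sum G S Prod.snd (fun i => ((G.filter (fun e => e.2 = i)).card : ℝ)),
          resid_sum G S Prod.fst (fun i => ((G.filter (fun e => e.1 = i)).card : ℝ)),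
          Finset.sum_mul_sum, Finset.mul_sum]
        refine Finset.sum_congr rfl fun e _ => ?_
        rw [Finset.mul_sum]
        refine Finset.sum_congr rfl fun f _ => ?_
        ring
    _ = ∑ e ∈ G, ∑ f ∈ G,
          (((G.filter (fun g => g.2 = e.2)).card : ℝ) *
              ((G.filter (fun g => g.1 = f.1)).card : ℝ)) *
            ∑ S ∈ G.powerset, ((r : ℝ) / G.card) ^ S.card * q ^ (G.card - S.card) *
              ((if e ∈ S then (0:ℝ) else 1) * (if f ∈ S then (0:ℝ) else 1)) := by
        rw [Finset.sum_comm]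
        refine Finset.sum_congr rfl fun e _ => ?_
        rw [Finset.sum_comm]
        refine Finset.sum_congr rfl fun f _ => ?_
        rw [Finset.mul_sum]
    _ = ∑ e ∈ G, ∑ f ∈ G,
          (((G.filter (fun g => g.2 = e.2)).card : ℝ) *
              ((G.filter (fun g => g.1 = f.1)).card : ℝ)) *
            (q ^ 2 + if f = e then q * (1 - q) else 0) := by
        refine Finset.sum_congr rfl fun e he => ?_
        refine Finset.sum_congr rfl fun f hf => ?_
        congr 1
        have hsub : ({e, f} : Finset (V × V)) ⊆ G := by
          intro x hx
          rcases Finset.mem_insert.mp hx with h | h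
          · exact h ▸ he
          · exact (Finset.mem_singleton.mp h) ▸ hf
        have hW : ∑ S ∈ G.powerset, ((r : ℝ) / G.card) ^ S.card * q ^ (G.card - S.card) *
            ((if e ∈ S then (0:ℝ) else 1) * (if f ∈ S then (0:ℝ) else 1))
            = q ^ ({e, f} : Finset (V × V)).card := by
          rw [← weight_avoid G {e, f} hsub ((r : ℝ) / G.card) q hpq]
          refine Finset.sum_congr rfl fun S _ => ?_
          congr 1
          by_cases heS : e ∈ S <;> by_cases hfS : f ∈ S <;>
            simp [heS, hfS, Finset.disjoint_insert_right, Finset.disjoint_singleton_right]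
        rw [hW]
        by_cases hef : f = e
        · subst hef
          rw [show ({f, f} : Finset (V × V)) = {f} by simp]
          simp only [Finset.card_singleton, pow_one, eq_self_iff_true, if_true]
          ring
        · rw [Finset.card_insert_of_notMem (by
            simp only [Finset.mem_singleton]
            exact fun h => hef h.symm), Finset.card_singleton, if_neg hef, add_zero]
    _ = q ^ 2 * (∑ e ∈ G, ((G.filter (fun g => g.2 = e.2)).card : ℝ)) *
            (∑ f ∈ G, ((G.filter (fun g => g.1 = f.1)).card : ℝ)) +
          q * (1 - q) * ∑ e ∈ G, ((G.filter (fun g => g.1 = e.1)).card : ℝ) *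
            ((G.filter (fun g => g.2 = e.2)).card : ℝ) := by
        have hinner : ∀ e ∈ G, ∑ f ∈ G,
            (((G.filter (fun g => g.2 = e.2)).card : ℝ) *
                ((G.filter (fun g => g.1 = f.1)).card : ℝ)) *
              (q ^ 2 + if f = e then q * (1 - q) else 0)
            = q ^ 2 * ((G.filter (fun g => g.2 = e.2)).card : ℝ) *
                (∑ f ∈ G, ((G.filter (fun g => g.1 = f.1)).card : ℝ)) +
              q * (1 - q) * (((G.filter (fun g => g.1 = e.1)).card : ℝ) *
                ((G.filter (fun g => g.2 = e.2)).card : ℝ)) := by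
          intro e he
          have hsplit : ∀ f ∈ G,
              (((G.filter (fun g => g.2 = e.2)).card : ℝ) *
                  ((G.filter (fun g => g.1 = f.1)).card : ℝ)) *
                (q ^ 2 + if f = e then q * (1 - q) else 0)
              = (q ^ 2 * ((G.filter (fun g => g.2 = e.2)).card : ℝ)) *
                  ((G.filter (fun g => g.1 = f.1)).card : ℝ) +
                (if f = e then (((G.filter (fun g => g.1 = f.1)).card : ℝ) *
                  ((G.filter (fun g => g.2 = e.2)).card : ℝ)) * (q * (1 - q)) else 0) := by
            intro f _
            by_cases h : f = e <;> simp [h] <;> ring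
          rw [Finset.sum_congr rfl hsplit, Finset.sum_add_distrib, ← Finset.mul_sum,
            Finset.sum_ite_eq' G e _, if_pos he]
          ring
        rw [Finset.sum_congr rfl hinner, Finset.sum_add_distrib, ← Finset.mul_sum,
          ← Finset.sum_mul, ← Finset.mul_sum]
    _ = q ^ 2 * (∑ i : V, ((G.filter (fun e => e.2 = i)).card : ℝ) ^ 2) *
          (∑ i : V, ((G.filter (fun e => e.1 = i)).card : ℝ) ^ 2) +
        q * (1 - q) * ∑ e ∈ G, ((G.filter (fun f => f.1 = e.1)).card : ℝ) *
          ((G.filter (fun f => f.2 = e.2)).card : ℝ) := by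
        rw [deg_sq G Prod.snd, deg_sq G Prod.fst]
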